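/- Let (G, ω) be a filling of a finite pseudo-metric space (M, ρ) and let π be a tour of G. Then π is exact if and only if ω(G) = p(M, ρ, π). Moreover, if π is an exact tour of G, then (G, ω) is a minimal parametric filling of type G, and mpf(M, ρ, G) = p(M, ρ, π) = max_{σ} p(M, ρ, σ), the maximum over all tours σ of G. -/

import Mathlib

open SimpleGraph Finset

structure IsPseudoMetric {M : Type} (ρ : M → M → ℝ) : Prop where
  nonneg : ∀ p q, 0 ≤ ρ p q
  refl : ∀ p, ρ p p = 0
  symm : ∀ p q, ρ p q = ρ q p
  triangle : ∀ p q r, ρ p r ≤ ρ p q + ρ q r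

/-- A tree joining a finite set `M`: a finite tree `G = (V, E)` with an injection `ι : M → V`
such that every vertex of degree 1 or 2 lies in the image of `M`. -/
structure Frame (M : Type) where
  V : Type
  [fin : Fintype V]
  [deq : DecidableEq V]
  G : SimpleGraph V
  [dec : DecidableRel G.Adj]
  tree : G.IsTree
  ι : M → V
  inj : Function.Injective ι
  joins : ∀ v : V, G.degree v = 1 ∨ G.degree v = 2 → v ∈ Set.range ι

attribute [instance] Frame.fin Frame.deq Frame.dec

namespace Frame

variable {M : Type}

/-- The unique path between two vertices of the tree. -/
noncomputable def path (F : Frame M) (u v : F.V) : F.G.Walk u v :=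
  (F.tree.existsUnique_path u v).exists.choose

/-- `d_ω(u,v)`: the sum of the weights of the edges of the unique path from `u` to `v`. -/
noncomputable def dist (F : Frame M) (w : Sym2 F.V → ℝ) (u v : F.V) : ℝ :=
  ((F.path u v).edges.map w).sum

/-- `ω(G)`: the total weight of all edges of the tree. -/
noncomputable def weight (F : Frame M) (w : Sym2 F.V → ℝ) : ℝ :=
  ∑ e ∈ F.G.edgeFinset, w e

/-- `(G, ω)` is a filling of `(M, ρ)`: nonnegative weights and `ρ p q ≤ d_ω(ι p, ι q)`. -/
def IsFilling (F : Frame M) (w : Sym2 F.V → ℝ) (ρ : M → M → ℝ) : Prop :=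
  (∀ e ∈ F.G.edgeFinset, 0 ≤ w e) ∧
  ∀ p q : M, ρ p q ≤ F.dist w (F.ι p) (F.ι q)

end Frame

/-- `mf(M,ρ)`: the infimum of weights of fillings of `(M, ρ)`. -/
noncomputable def mf {M : Type} (ρ : M → M → ℝ) : ℝ :=
  sInf { x | ∃ F : Frame M, ∃ w : Sym2 F.V → ℝ, F.IsFilling w ρ ∧ F.weight w = x }

/-- A minimal filling: a filling whose weight equals `mf(M,ρ)`. -/
def IsMinFilling {M : Type} (F : Frame M) (w : Sym2 F.V → ℝ) (ρ : M → M → ℝ) : Prop :=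
  F.IsFilling w ρ ∧ F.weight w = mf ρ

/-- A cyclic order on `M`: a permutation acting transitively (a single cycle through all of `M`). -/
def IsCyclicOrder {M : Type} (π : Equiv.Perm M) : Prop :=
  ∀ p q : M, ∃ n : ℕ, (π ^ n) p = q

namespace Frame

variable {M : Type}

/-- The part of `M` lying, after removal of the edge `s(u,v)`, in the component of `u`. -/
def sideM (F : Frame M) (u v : F.V) : Set M :=
  { p : M | (F.G.deleteEdges {s(u, v)}).Reachable (F.ι p) u }

/-- `π` is a tour of `G` (a planar order): a cyclic order such that for every edge and
each part of the induced partition of `M` there is exactly one point leaving the part. -/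
def IsTour (F : Frame M) (π : Equiv.Perm M) : Prop :=
  IsCyclicOrder π ∧
  ∀ u v : F.V, F.G.Adj u v →
    ∃! p : M, p ∈ F.sideM u v ∧ π p ∉ F.sideM u v

end Frame

/-- The half-perimeter of `(M, ρ)` with respect to a cyclic order `π`. -/
noncomputable def halfPerim {M : Type} [Fintype M] (ρ : M → M → ℝ) (π : Equiv.Perm M) : ℝ :=
  (∑ p : M, ρ p (π p)) / 2

/-- `mpf(M, ρ, G)`: the weight of a minimal parametric filling of type `G`. -/
noncomputable def mpf {M : Type} (F : Frame M) (ρ : M → M → ℝ) : ℝ :=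
  sInf { x | ∃ w : Sym2 F.V → ℝ, F.IsFilling w ρ ∧ F.weight w = x }

/-- A tour `π` is exact for the filling `(G, ω)` if `ρ(p, π p) = d_ω(p, π p)` for all `p`. -/
def IsExactTour {M : Type} (F : Frame M) (w : Sym2 F.V → ℝ) (ρ : M → M → ℝ)
    (π : Equiv.Perm M) : Prop :=
  ∀ p : M, ρ p (π p) = F.dist w (F.ι p) (F.ι (π p))

namespace MyAux

variable {M : Type} (F : Frame M)

lemma path_isPath (u v : F.V) : (F.path u v).IsPath :=
  (F.tree.existsUnique_path u v).exists.choose_spec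

lemma path_unique {u v : F.V} (p : F.G.Walk u v) (hp : p.IsPath) : p = F.path u v :=
  (F.tree.existsUnique_path u v).unique hp (path_isPath F u v)

lemma reach_of_avoid {u v a b : F.V} (W : F.G.Walk a b) (h : s(u, v) ∉ W.edges) :
    (F.G.deleteEdges {s(u, v)}).Reachable a b := by
  refine ⟨W.transfer _ fun e he => ?_⟩
  rw [SimpleGraph.edgeSet_deleteEdges]
  refine ⟨W.edges_subset_edgeSet he, fun h' => h ?_⟩
  rw [Set.mem_singleton_iff] at h'
  exact h' ▸ he

lemma avoid_of_reach {u v a b : F.V}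
    (h : (F.G.deleteEdges {s(u, v)}).Reachable a b) :
    s(u, v) ∉ (F.path a b).edges := by
  obtain ⟨W⟩ := h
  have hW : ∀ e ∈ W.edges, e ∈ F.G.edgeSet := fun e he => by
    have := W.edges_subset_edgeSet he
    rw [SimpleGraph.edgeSet_deleteEdges] at this
    exact this.1
  set W' := W.transfer F.G hW with hW'
  have hne : s(u, v) ∉ W'.edges := by
    rw [hW', SimpleGraph.Walk.edges_transfer]
    intro hmem
    have := W.edges_subset_edgeSet hmem
    rw [SimpleGraph.edgeSet_deleteEdges] at this
    exact this.2 rfl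
  have hpath := path_unique F (W'.toPath : F.G.Walk a b) W'.toPath.2
  intro hc
  rw [← hpath] at hc
  exact hne (SimpleGraph.Walk.edges_toPath_subset _ hc)

lemma bridge {u v : F.V} (h : F.G.Adj u v) :
    ¬ (F.G.deleteEdges {s(u, v)}).Reachable u v := by
  have hb := (SimpleGraph.isAcyclic_iff_forall_edge_isBridge.mp F.tree.IsAcyclic)
    ((F.G.mem_edgeSet).mpr h)
  exact (SimpleGraph.isBridge_iff.mp hb)

lemma total {u v : F.V} (h : F.G.Adj u v) (x : F.V) :
    (F.G.deleteEdges {s(u, v)}).Reachable x u ∨ (F.G.deleteEdges {s(u, v)}).Reachable x v := by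
  by_cases hm : s(u, v) ∈ (F.path x u).edges
  · right
    have hv : v ∈ (F.path x u).support := SimpleGraph.Walk.snd_mem_support_of_mem_edges _ hm
    refine reach_of_avoid F ((F.path x u).takeUntil v hv) fun hc => ?_
    have hu : u ∈ ((F.path x u).takeUntil v hv).support :=
      SimpleGraph.Walk.fst_mem_support_of_mem_edges _ hc
    have hnd := (path_isPath F x u).support_nodup
    rw [← SimpleGraph.Walk.take_spec (F.path x u) hv, SimpleGraph.Walk.support_append] at hnd
    have hdisj := (List.nodup_append.mp hnd).2.2
    have hu2 : u ∈ ((F.path x u).dropUntil v hv).support.tail := by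
      have hend : u ∈ ((F.path x u).dropUntil v hv).support :=
        SimpleGraph.Walk.end_mem_support _
      rw [SimpleGraph.Walk.support_eq_cons] at hend
      rcases List.mem_cons.mp hend with h2 | h2
      · exact absurd h2 h.ne
      · exact h2
    exact hdisj u hu u hu2 rfl
  · left
    exact reach_of_avoid F (F.path x u) hm

lemma mem_path_iff {u v : F.V} (h : F.G.Adj u v) (x y : F.V) :
    s(u, v) ∈ (F.path x y).edges ↔
      ¬((F.G.deleteEdges {s(u, v)}).Reachable x u ↔
        (F.G.deleteEdges {s(u, v)}).Reachable y u) := by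
  constructor
  · intro hm hiff
    by_cases hx : (F.G.deleteEdges {s(u, v)}).Reachable x u
    · exact avoid_of_reach F (hx.trans (hiff.mp hx).symm) hm
    · rcases total F h x with hx' | hx'
      · exact hx hx'
      rcases total F h y with hy' | hy'
      · exact hx (hiff.mpr hy')
      exact avoid_of_reach F (hx'.trans hy'.symm) hm
  · intro hne
    by_contra hm
    have hxy := reach_of_avoid F (F.path x y) hm
    exact hne ⟨fun hx => hxy.symm.trans hx, fun hy => hxy.trans hy⟩

lemma side_iff_not_side {u v : F.V} (h : F.G.Adj u v) (x : F.V) :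
    (F.G.deleteEdges {s(u, v)}).Reachable x v ↔
      ¬ (F.G.deleteEdges {s(u, v)}).Reachable x u := by
  constructor
  · intro hv hu
    exact bridge F h (hu.symm.trans hv)
  · intro hu
    rcases total F h x with h' | h'
    · exact absurd h' hu
    · exact h'

lemma card_cross [Fintype M] {σ : Equiv.Perm M} (hσ : F.IsTour σ) {u v : F.V} (h : F.G.Adj u v) :
    (Finset.univ.filter
      (fun p : M => s(u, v) ∈ (F.path (F.ι p) (F.ι (σ p))).edges)).card = 2 := by
  classical
  obtain ⟨p₁, hp₁, hp₁u⟩ := hσ.2 u v h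
  obtain ⟨p₂, hp₂, hp₂u⟩ := hσ.2 v u h.symm
  have hswap : (({s(v, u)} : Set (Sym2 F.V))) = {s(u, v)} := by rw [Sym2.eq_swap]
  -- membership in sideM u v is reachability to u; in sideM v u is reachability to v
  have hside2 : ∀ p : M, p ∈ F.sideM v u ↔
      (F.G.deleteEdges {s(u, v)}).Reachable (F.ι p) v := by
    intro p
    unfold Frame.sideM
    rw [hswap]
    rfl
  have hmem : ∀ p : M,
      (s(u, v) ∈ (F.path (F.ι p) (F.ι (σ p))).edges) ↔
      ((p ∈ F.sideM u v ∧ σ p ∉ F.sideM u v) ∨ (p ∈ F.sideM v u ∧ σ p ∉ F.sideM v u)) := by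
    intro p
    rw [mem_path_iff F h]
    have h1 : p ∈ F.sideM u v ↔ (F.G.deleteEdges {s(u, v)}).Reachable (F.ι p) u := Iff.rfl
    have h2 : σ p ∈ F.sideM u v ↔
        (F.G.deleteEdges {s(u, v)}).Reachable (F.ι (σ p)) u := Iff.rfl
    rw [hside2 p, hside2 (σ p), side_iff_not_side F h, side_iff_not_side F h, h1, h2]
    tauto
  have hfilter : (Finset.univ.filter
      (fun p : M => s(u, v) ∈ (F.path (F.ι p) (F.ι (σ p))).edges)) = {p₁, p₂} := by
    ext p
    simp only [Finset.mem_filter, Finset.mem_univ, true_and, Finset.mem_insert,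
      Finset.mem_singleton]
    rw [hmem p]
    constructor
    · rintro (hc | hc)
      · exact Or.inl (hp₁u p hc)
      · exact Or.inr (hp₂u p hc)
    · rintro (rfl | rfl)
      · exact Or.inl hp₁
      · exact Or.inr hp₂
  rw [hfilter]
  have hne : p₁ ≠ p₂ := by
    intro hEq
    subst hEq
    have := (hside2 p₁).mp hp₂.1
    exact (side_iff_not_side F h _).mp this hp₁.1
  rw [Finset.card_insert_of_notMem (by simpa using hne), Finset.card_singleton]

lemma sum_dist [Fintype M] {σ : Equiv.Perm M} (hσ : F.IsTour σ) (w : Sym2 F.V → ℝ) :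
    ∑ p : M, F.dist w (F.ι p) (F.ι (σ p)) = 2 * F.weight w := by
  classical
  have key : ∀ p : M, F.dist w (F.ι p) (F.ι (σ p)) =
      ∑ e ∈ F.G.edgeFinset,
        if e ∈ (F.path (F.ι p) (F.ι (σ p))).edges then w e else 0 := by
    intro p
    rw [Frame.dist, ← List.sum_toFinset w
      (path_isPath F (F.ι p) (F.ι (σ p))).isTrail.edges_nodup, ← Finset.sum_filter]
    congr 1
    ext e
    simp only [Finset.mem_filter, List.mem_toFinset, SimpleGraph.mem_edgeFinset]
    exact ⟨fun h => ⟨SimpleGraph.Walk.edges_subset_edgeSet _ h, h⟩, fun h => h.2⟩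
  calc ∑ p : M, F.dist w (F.ι p) (F.ι (σ p))
      = ∑ p : M, ∑ e ∈ F.G.edgeFinset,
          if e ∈ (F.path (F.ι p) (F.ι (σ p))).edges then w e else 0 := by
        exact Finset.sum_congr rfl fun p _ => key p
    _ = ∑ e ∈ F.G.edgeFinset, ∑ p : M,
          if e ∈ (F.path (F.ι p) (F.ι (σ p))).edges then w e else 0 := Finset.sum_comm
    _ = 2 * F.weight w := by
        rw [Frame.weight, Finset.mul_sum]
        refine Finset.sum_congr rfl fun e he => ?_
        induction e using Sym2.ind with
        | _ u v =>
          have hadj : F.G.Adj u v := (F.G.mem_edgeSet).mp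
            (SimpleGraph.mem_edgeFinset.mp he)
          rw [← Finset.sum_filter, Finset.sum_const, card_cross F hσ hadj, nsmul_eq_mul]
          norm_num

lemma halfPerim_le_weight {ρ : M → M → ℝ} [Fintype M] {σ : Equiv.Perm M}
    (hσ : F.IsTour σ) {w : Sym2 F.V → ℝ} (hw : F.IsFilling w ρ) :
    halfPerim ρ σ ≤ F.weight w := by
  rw [halfPerim, div_le_iff₀ (by norm_num : (0:ℝ) < 2)]
  calc ∑ p : M, ρ p (σ p) ≤ ∑ p : M, F.dist w (F.ι p) (F.ι (σ p)) :=
        Finset.sum_le_sum fun p _ => hw.2 p (σ p)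
    _ = 2 * F.weight w := sum_dist F hσ w
    _ = F.weight w * 2 := by ring

end MyAux

theorem stmt7 {M : Type} [Fintype M] (ρ : M → M → ℝ) (hρ : IsPseudoMetric ρ)
    (F : Frame M) (w : Sym2 F.V → ℝ) (hfill : F.IsFilling w ρ)
    (π : Equiv.Perm M) (htour : F.IsTour π) :
    (IsExactTour F w ρ π ↔ F.weight w = halfPerim ρ π) ∧
    (IsExactTour F w ρ π →
      (∀ w' : Sym2 F.V → ℝ, F.IsFilling w' ρ → F.weight w ≤ F.weight w') ∧
      mpf F ρ = halfPerim ρ π ∧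
      ∀ σ : Equiv.Perm M, F.IsTour σ → halfPerim ρ σ ≤ halfPerim ρ π) := by
  have hkey : ∀ w' : Sym2 F.V → ℝ, F.IsFilling w' ρ → halfPerim ρ π ≤ F.weight w' :=
    fun w' hw' => MyAux.halfPerim_le_weight F htour hw'
  have hiff : IsExactTour F w ρ π ↔ F.weight w = halfPerim ρ π := by
    constructor
    · intro hex
      have hs : ∑ p : M, ρ p (π p) = ∑ p : M, F.dist w (F.ι p) (F.ι (π p)) :=
        Finset.sum_congr rfl fun p _ => hex p
      have := MyAux.sum_dist F htour w
      rw [halfPerim, hs, this]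
      ring
    · intro hw
      have hsum : ∑ p : M, (F.dist w (F.ι p) (F.ι (π p)) - ρ p (π p)) = 0 := by
        rw [Finset.sum_sub_distrib, MyAux.sum_dist F htour w]
        have h2 : F.weight w = (∑ p : M, ρ p (π p)) / 2 := hw
        rw [h2]
        ring
      have hz := (Finset.sum_eq_zero_iff_of_nonneg
        (fun p _ => sub_nonneg.mpr (hfill.2 p (π p)))).mp hsum
      intro p
      have := hz p (Finset.mem_univ p)
      linarith
  refine ⟨hiff, fun hex => ?_⟩
  have hw : F.weight w = halfPerim ρ π := hiff.mp hex
  refine ⟨fun w' hw' => hw ▸ hkey w' hw', ?_, fun σ hσ => ?_⟩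
  · apply le_antisymm
    · exact csInf_le ⟨halfPerim ρ π, by rintro x ⟨w', hw', rfl⟩; exact hkey w' hw'⟩
        ⟨w, hfill, hw⟩
    · exact le_csInf ⟨F.weight w, w, hfill, rfl⟩
        (by rintro x ⟨w', hw', rfl⟩; exact hkey w' hw')
  · calc halfPerim ρ σ ≤ F.weight w := MyAux.halfPerim_le_weight F hσ hfill
      _ = halfPerim ρ π := hw
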